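/- Let ζ = (1+√(−3))/2, w = [[0,0,−1],[0,1,0],[1,0,0]], and ε = diag(ζ, ζ⁻², ζ). Then the matrix εw lies in SU(2,1;ℤ[ζ]) (i.e., it has determinant 1, entries in ℤ[ζ], and satisfies (εw)* C (εw) = C for C = [[0,0,1/√(−3)],[0,1,0],[−1/√(−3),0,0]]), and εw has multiplicative order exactly 12. -/

import Mathlib

open Matrix Complex

noncomputable def sqrtD (D : ℝ) : ℂ := Complex.I * Real.sqrt |D|

noncomputable def formC (D : ℝ) : Matrix (Fin 3) (Fin 3) ℂ :=
  !![0, 0, 1 / sqrtD D; 0, 1, 0; -(1 / sqrtD D), 0, 0]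

noncomputable def Qform (D : ℝ) (u v : Fin 3 → ℂ) : ℂ :=
  star u ⬝ᵥ (formC D).mulVec v

noncomputable def sqrtm3 : ℂ := Complex.I * Real.sqrt 3

noncomputable def zet : ℂ := (1 + sqrtm3) / 2

noncomputable def eps : Matrix (Fin 3) (Fin 3) ℂ := !![zet, 0, 0; 0, (zet ^ 2)⁻¹, 0; 0, 0, zet]

noncomputable def wmat : Matrix (Fin 3) (Fin 3) ℂ := !![0, 0, -1; 0, 1, 0; 1, 0, 0]

lemma hs : sqrtm3 ^ 2 = -3 := by
  have h3 : ((Real.sqrt 3 : ℝ) : ℂ) ^ 2 = 3 := by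
    norm_cast; rw [Real.sq_sqrt] <;> norm_num
  unfold sqrtm3; rw [mul_pow, Complex.I_sq, h3]; ring

lemma hz2 : zet ^ 2 = zet - 1 := by
  unfold zet; field_simp; linear_combination hs

lemma hz3 : zet ^ 3 = -1 := by linear_combination (zet + 1) * hz2

lemma hinv : (zet ^ 2)⁻¹ = -zet :=
  inv_eq_of_mul_eq_one_right (by linear_combination -hz3)

lemma hconj : (starRingEnd ℂ) zet = 1 - zet := by
  unfold zet sqrtm3
  simp [map_div₀, Complex.conj_I, Complex.conj_ofReal, map_ofNat]
  ring

lemma hsne : sqrtm3 ≠ 0 := by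
  intro h; have := hs; rw [h] at this; norm_num at this

lemma hM : eps * wmat = !![0, 0, -zet; 0, -zet, 0; zet, 0, 0] := by
  unfold eps wmat
  rw [Matrix.mul_fin_three, hinv]
  norm_num

lemma hC : formC (-3) = !![0, 0, 1 / sqrtm3; 0, 1, 0; -(1 / sqrtm3), 0, 0] := by
  unfold formC sqrtD sqrtm3
  norm_num

lemma hM2 : (eps * wmat) ^ 2 = !![1 - zet, 0, 0; 0, zet - 1, 0; 0, 0, 1 - zet] := by
  rw [pow_two, hM, Matrix.mul_fin_three]
  ext i j
  fin_cases i <;> fin_cases j <;> simp <;>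
    first
    | linear_combination hz2
    | linear_combination -hz2

lemma hM4 : (eps * wmat) ^ 4 = !![-zet, 0, 0; 0, -zet, 0; 0, 0, -zet] := by
  rw [show (4 : ℕ) = 2 * 2 from rfl, pow_mul, hM2, pow_two, Matrix.mul_fin_three]
  ext i j
  fin_cases i <;> fin_cases j <;> simp <;>
    first
    | linear_combination hz2
    | linear_combination -hz2

lemma hM6 : (eps * wmat) ^ 6 = !![-1, 0, 0; 0, 1, 0; 0, 0, -1] := by
  rw [show (6 : ℕ) = 4 + 2 from rfl, pow_add, hM4, hM2, Matrix.mul_fin_three]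
  ext i j
  fin_cases i <;> fin_cases j <;> simp <;>
    first
    | linear_combination hz2
    | linear_combination -hz2

lemma hM12 : (eps * wmat) ^ 12 = 1 := by
  rw [show (12 : ℕ) = 6 * 2 from rfl, pow_mul, hM6, pow_two, Matrix.mul_fin_three,
    Matrix.one_fin_three]
  ext i j
  fin_cases i <;> fin_cases j <;> simp

theorem stmt7 :
    (eps * wmat).det = 1 ∧
    (∀ i j, ∃ a b : ℤ, (eps * wmat) i j = (a : ℂ) + (b : ℂ) * zet) ∧
    (eps * wmat)ᴴ * formC (-3) * (eps * wmat) = formC (-3) ∧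
    orderOf (eps * wmat) = 12 := by
  refine ⟨?_, ?_, ?_, ?_⟩
  · rw [hM, Matrix.det_fin_three]
    simp
    linear_combination -hz3
  · intro i j
    fin_cases i <;> fin_cases j
    · exact ⟨0, 0, by rw [hM]; simp [Matrix.vecHead, Matrix.vecTail]⟩
    · exact ⟨0, 0, by rw [hM]; simp [Matrix.vecHead, Matrix.vecTail]⟩
    · exact ⟨0, -1, by rw [hM]; simp [Matrix.vecHead, Matrix.vecTail]⟩
    · exact ⟨0, 0, by rw [hM]; simp [Matrix.vecHead, Matrix.vecTail]⟩
    · exact ⟨0, -1, by rw [hM]; simp [Matrix.vecHead, Matrix.vecTail]⟩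
    · exact ⟨0, 0, by rw [hM]; simp [Matrix.vecHead, Matrix.vecTail]⟩
    · exact ⟨0, 1, by rw [hM]; simp [Matrix.vecHead, Matrix.vecTail]⟩
    · exact ⟨0, 0, by rw [hM]; simp [Matrix.vecHead, Matrix.vecTail]⟩
    · exact ⟨0, 0, by rw [hM]; simp [Matrix.vecHead, Matrix.vecTail]⟩
  · rw [hM, hC]
    ext i j
    fin_cases i <;> fin_cases j <;>
      simp [Matrix.mul_apply, Fin.sum_univ_three, hconj, Matrix.vecHead, Matrix.vecTail] <;>
      first
      | rfl
      | linear_combination (-2 * sqrtm3⁻¹) * hz2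
      | linear_combination (-1 - sqrtm3⁻¹ : ℂ) * hz2
      | linear_combination (sqrtm3⁻¹ - 1 : ℂ) * hz2
      | linear_combination sqrtm3⁻¹ * hz2
      | linear_combination (-sqrtm3⁻¹ : ℂ) * hz2
      | linear_combination hz2
      | linear_combination -hz2
      | ring
  · have h6 : (eps * wmat) ^ 6 ≠ 1 := by
      rw [hM6]; intro h
      have := congrFun (congrFun h 0) 0
      simp [Matrix.one_apply] at this
      norm_num at this
    have h4 : (eps * wmat) ^ 4 ≠ 1 := by
      rw [hM4]; intro h
      have := congrFun (congrFun h 0) 0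
      simp [Matrix.one_apply] at this
      have h' : zet = -1 := by linear_combination -this
      have h2 := hz2
      rw [h'] at h2
      norm_num at h2
    have hdvd : orderOf (eps * wmat) ∣ 12 := orderOf_dvd_of_pow_eq_one hM12
    have h6' : ¬ orderOf (eps * wmat) ∣ 6 := fun h => h6 (orderOf_dvd_iff_pow_eq_one.mp h)
    have h4' : ¬ orderOf (eps * wmat) ∣ 4 := fun h => h4 (orderOf_dvd_iff_pow_eq_one.mp h)
    have hle := Nat.le_of_dvd (by norm_num) hdvd
    interval_cases h : orderOf (eps * wmat) <;> omega
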